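/- For integers n > m ≥ 0 and real numbers satisfying the formal identity: Σ_{i=m+1}^{n} (-1)^i C(n,i) C(n+i-1, i) = (-1)^{m+1} C(n-1, m) C(n+m, m). -/
import Mathlib

open Finset

lemma key0 (m d : ℕ) :
    Nat.choose (m + d + 1) m * Nat.choose (m + d + 2 + m) (m + 1) =
      Nat.choose (m + d + 1) m * Nat.choose (m + d + 2 + m) m +
        Nat.choose (m + d + 1) (m + 1) * Nat.choose (m + d + 2 + m) m := by
  have h1 := Nat.choose_succ_right_eq (m + d + 2 + m) m
  have h2 := Nat.choose_succ_right_eq (m + d + 1) m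
  have hc : (m + d + 2 + m) - m = m + d + 2 := by omega
  have hc2 : (m + d + 1) - m = d + 1 := by omega
  rw [hc] at h1
  rw [hc2] at h2
  have hmul : (Nat.choose (m + d + 1) m * Nat.choose (m + d + 2 + m) (m + 1)) * (m + 1) =
      (Nat.choose (m + d + 1) m * Nat.choose (m + d + 2 + m) m +
        Nat.choose (m + d + 1) (m + 1) * Nat.choose (m + d + 2 + m) m) * (m + 1) := by
    nlinarith [h1, h2]
  exact Nat.eq_of_mul_eq_mul_right (Nat.succ_pos m) hmul

lemma key (m d : ℕ) :
    Nat.choose (m + d + 2) (m + 1) * Nat.choose (m + d + 2 + m) (m + 1) =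
      Nat.choose (m + d + 1) m * Nat.choose (m + d + 2 + m) m +
        Nat.choose (m + d + 1) (m + 1) * Nat.choose (m + d + 2 + m + 1) (m + 1) := by
  have e1 : m + d + 2 = (m + d + 1) + 1 := by ring
  rw [e1, Nat.choose_succ_succ (m + d + 1) m]
  rw [show (m + d + 1) + 1 + m + 1 = (m + d + 1 + 1 + m) + 1 from rfl,
    Nat.choose_succ_succ (m + d + 1 + 1 + m) m]
  nlinarith [key0 m d]

theorem stmt17 (n m : ℕ) (h : m < n) :
    ∑ i ∈ Finset.Icc (m + 1) n,
        ((-1 : ℤ) ^ i * (Nat.choose n i : ℤ) * (Nat.choose (n + i - 1) i : ℤ)) =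
      (-1 : ℤ) ^ (m + 1) * (Nat.choose (n - 1) m : ℤ) *
        (Nat.choose (n + m) m : ℤ) := by
  obtain ⟨d, rfl⟩ : ∃ d, n = m + d + 1 := ⟨n - m - 1, by omega⟩
  clear h
  induction d generalizing m with
  | zero =>
    simp only [Finset.Icc_self, Finset.sum_singleton]
    have h1 : m + 0 + 1 + (m + 1) - 1 = 2 * m + 1 := by omega
    have h2 : m + 0 + 1 - 1 = m := by omega
    have h3 : m + 0 + 1 + m = 2 * m + 1 := by omega
    rw [h1, h2, h3, Nat.choose_self, Nat.choose_self, Nat.choose_symm_half]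
  | succ d ih =>
    have hsplit : Finset.Icc (m + 1) (m + (d+1) + 1) =
        insert (m + 1) (Finset.Icc (m + 2) (m + (d+1) + 1)) := by
      ext x; simp only [Finset.mem_Icc, Finset.mem_insert]; omega
    rw [hsplit, Finset.sum_insert (by simp [Finset.mem_Icc])]
    have hn : m + (d + 1) + 1 = (m + 1) + d + 1 := by ring
    have ih' := ih (m + 1)
    rw [show m + 1 + 1 = m + 2 from rfl] at ih'
    rw [hn, ih']
    rw [show m + 1 + d + 1 = m + d + 2 from by ring]
    rw [show m + d + 2 + (m + 1) - 1 = m + d + 2 + m from by omega,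
      show m + d + 2 - 1 = m + d + 1 from by omega,
      show m + d + 2 + (m + 1) = m + d + 2 + m + 1 from by ring]
    have hk' : (Nat.choose (m + d + 2) (m + 1) * Nat.choose (m + d + 2 + m) (m + 1) : ℤ) =
        (Nat.choose (m + d + 1) m * Nat.choose (m + d + 2 + m) m : ℤ) +
          (Nat.choose (m + d + 1) (m + 1) * Nat.choose (m + d + 2 + m + 1) (m + 1) : ℤ) := by
      exact_mod_cast key m d
    rw [pow_succ (-1 : ℤ) (m + 1)]
    linear_combination ((-1 : ℤ) ^ (m + 1)) * hk'
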